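/- (Sufficiency of the Euclidean distance profile for variance minimality) Let m₁ ≥ m₂ ≥ 1 be natural numbers, N = m₁ + m₂, ℓ = ⌊N/m₂⌋ and u = ⌈N/m₂⌉. Suppose C : ZMod N → {a₁, a₂} is an admissible cycle (fibers of sizes m₁ and m₂) such that: exactly m₁ − m₂ instances of a₁ have Δ_C(j) = 1 and exactly m₂ instances of a₁ have Δ_C(j) = 2; and every instance of a₂ has Δ_C(j) ∈ {ℓ, u}. Then C minimizes the variance: for every admissible cycle C', σ²(C) ≤ σ²(C'). -/
import Mathlib


open Finset

/-- The distance from position `j` to the next occurrence of the same symbol: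
the least positive `d` with `C (j + d) = C j`. -/
noncomputable def cycleDist {N : ℕ} {A : Type*} (C : ZMod N → A) (j : ZMod N) : ℕ :=
  sInf {d : ℕ | 0 < d ∧ C (j + (d : ZMod N)) = C j}

/-- A cycle is admissible for multiplicities `m` if every fiber has the prescribed size. -/
def Admissible {N : ℕ} [NeZero N] {A : Type*} [Fintype A] [DecidableEq A]
    (m : A → ℕ) (C : ZMod N → A) : Prop :=
  ∀ a : A, (Finset.univ.filter (fun j => C j = a)).card = m a

/-- The mean of a cycle. -/
noncomputable def cycleMean {N : ℕ} [NeZero N] {A : Type*} (C : ZMod N → A) : ℚ :=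
  (∑ j : ZMod N, (cycleDist C j : ℚ)) / N

/-- The second (raw) moment of a cycle. -/
noncomputable def cycleMoment2 {N : ℕ} [NeZero N] {A : Type*} (C : ZMod N → A) : ℚ :=
  (∑ j : ZMod N, (cycleDist C j : ℚ) ^ 2) / N

/-- The variance of a cycle. -/
noncomputable def cycleVariance {N : ℕ} [NeZero N] {A : Type*} (C : ZMod N → A) : ℚ :=
  (∑ j : ZMod N, ((cycleDist C j : ℚ) - cycleMean C) ^ 2) / N

section Aux
variable {N : ℕ} [NeZero N] {A : Type*}

lemma cycleDist_mem (C : ZMod N → A) (j : ZMod N) :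
    cycleDist C j ∈ {d : ℕ | 0 < d ∧ C (j + (d : ZMod N)) = C j} :=
  Nat.sInf_mem ⟨N, Nat.pos_of_ne_zero (NeZero.ne N), by simp⟩

lemma cycleDist_pos (C : ZMod N → A) (j : ZMod N) : 0 < cycleDist C j := (cycleDist_mem C j).1

lemma cycleDist_add (C : ZMod N → A) (j : ZMod N) :
    C (j + (cycleDist C j : ZMod N)) = C j := (cycleDist_mem C j).2

lemma cycleDist_le (C : ZMod N → A) (j : ZMod N) : cycleDist C j ≤ N :=
  Nat.sInf_le ⟨Nat.pos_of_ne_zero (NeZero.ne N), by simp⟩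

lemma cycleDist_min (C : ZMod N → A) (j : ZMod N) {d : ℕ} (h1 : 0 < d)
    (h2 : d < cycleDist C j) : C (j + (d : ZMod N)) ≠ C j := fun h =>
  Nat.notMem_of_lt_sInf h2 ⟨h1, h⟩

lemma sum_cycleDist_fiber [DecidableEq A] (C : ZMod N → A) (a : A)
    (ha : ∃ j₀, C j₀ = a) :
    ∑ j ∈ univ.filter (fun j => C j = a), cycleDist C j = N := by
  classical
  obtain ⟨j₀, hj₀⟩ := ha
  set b : ZMod N → ℕ := fun k => sInf {d : ℕ | C (k - (d : ZMod N)) = a} with hbdef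
  have hbne : ∀ k : ZMod N, {d : ℕ | C (k - (d : ZMod N)) = a}.Nonempty := by
    intro k
    refine ⟨(k - j₀).val, ?_⟩
    simp only [Set.mem_setOf_eq, ZMod.natCast_val, ZMod.cast_id]
    simpa using hj₀
  have hbmem : ∀ k, C (k - (b k : ZMod N)) = a := fun k => Nat.sInf_mem (hbne k)
  have hbmin : ∀ k, ∀ s < b k, C (k - (s : ZMod N)) ≠ a := fun k s hs =>
    Nat.notMem_of_lt_sInf hs
  have hmaps : ∀ k ∈ (univ : Finset (ZMod N)),
      k - (b k : ZMod N) ∈ univ.filter (fun j => C j = a) := by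
    intro k _
    simp [hbmem k]
  have hcard := Finset.card_eq_sum_card_fiberwise hmaps
  have hfib : ∀ j ∈ univ.filter (fun j => C j = a),
      (univ.filter (fun k => k - (b k : ZMod N) = j)).card = cycleDist C j := by
    intro j hj
    have hja : C j = a := (mem_filter.mp hj).2
    have hset : univ.filter (fun k => k - (b k : ZMod N) = j)
        = (range (cycleDist C j)).image (fun t : ℕ => j + (t : ZMod N)) := by
      ext k
      simp only [mem_filter, mem_univ, true_and, mem_image, mem_range]
      constructor
      · intro hk
        refine ⟨b k, ?_, ?_⟩
        · by_contra hlt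
          push_neg at hlt
          have h1 : C (j + (cycleDist C j : ZMod N)) = a :=
            (cycleDist_add C j).trans hja
          have h2 : j + (cycleDist C j : ZMod N)
              = k - ((b k - cycleDist C j : ℕ) : ZMod N) := by
            rw [Nat.cast_sub hlt, ← hk]; ring
          have h3 : b k - cycleDist C j < b k := by
            have := cycleDist_pos C j; omega
          exact hbmin k _ h3 (h2 ▸ h1)
        · rw [← hk]; ring
      · rintro ⟨t, ht, rfl⟩
        have hbk : b (j + (t : ZMod N)) = t := by
          have hmem' : t ∈ {d : ℕ | C (j + (t : ZMod N) - (d : ZMod N)) = a} := by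
            simp [hja]
          have hle : b (j + (t : ZMod N)) ≤ t := Nat.sInf_le hmem'
          rcases eq_or_lt_of_le hle with h | h
          · exact h
          · exfalso
            have h1 : C (j + (t : ZMod N) - (b (j + (t : ZMod N)) : ZMod N)) = a := hbmem _
            have h2 : j + (t : ZMod N) - (b (j + (t : ZMod N)) : ZMod N)
                = j + ((t - b (j + (t : ZMod N)) : ℕ) : ZMod N) := by
              rw [Nat.cast_sub (le_of_lt h)]; ring
            have h4 : C (j + ((t - b (j + (t : ZMod N)) : ℕ) : ZMod N)) ≠ C j :=
              cycleDist_min C j (by omega) (by omega)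
            rw [h2] at h1
            exact h4 (h1.trans hja.symm)
        rw [hbk]; ring
    rw [hset, Finset.card_image_of_injOn, Finset.card_range]
    intro t1 h1 t2 h2 he
    simp only [coe_range, Set.mem_Iio] at h1 h2
    have hle := cycleDist_le C j
    have hc : (t1 : ZMod N) = (t2 : ZMod N) := by
      have := he; simpa using this
    have := congrArg ZMod.val hc
    rwa [ZMod.val_cast_of_lt (by omega), ZMod.val_cast_of_lt (by omega)] at this
  calc ∑ j ∈ univ.filter (fun j => C j = a), cycleDist C j
      = ∑ j ∈ univ.filter (fun j => C j = a),
          (univ.filter (fun k => k - (b k : ZMod N) = j)).card :=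
        (Finset.sum_congr rfl hfib).symm
    _ = (univ : Finset (ZMod N)).card := hcard.symm
    _ = N := by rw [card_univ, ZMod.card]

end Aux

section Aux2
variable {N : ℕ} [NeZero N] {A : Type*}

lemma sq_bound_q (d q : ℕ) : (2 * (q:ℚ) + 1) * d - q * (q + 1) ≤ (d : ℚ) ^ 2 := by
  have h : (0:ℚ) ≤ ((d:ℚ) - q) * ((d:ℚ) - q - 1) := by
    rcases le_or_gt d q with h | h
    · have h1 : (d:ℚ) ≤ q := by exact_mod_cast h
      nlinarith
    · have h1 : (q:ℚ) + 1 ≤ d := by exact_mod_cast h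
      nlinarith
  nlinarith

lemma sq_eq_q (d q : ℕ) (h : d = q ∨ d = q + 1) :
    (d : ℚ) ^ 2 = (2 * (q:ℚ) + 1) * d - q * (q + 1) := by
  rcases h with h | h <;> subst h <;> push_cast <;> ring

lemma fiber_sq_ge [DecidableEq A] (C : ZMod N → A) (a : A) (q : ℕ)
    (ha : ∃ j₀, C j₀ = a) :
    (2 * (q:ℚ) + 1) * N - ((univ.filter (fun j => C j = a)).card : ℚ) * (q * (q + 1))
      ≤ ∑ j ∈ univ.filter (fun j => C j = a), (cycleDist C j : ℚ) ^ 2 := by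
  have hsum : ((∑ j ∈ univ.filter (fun j => C j = a), cycleDist C j : ℕ) : ℚ) = N := by
    exact_mod_cast congrArg (Nat.cast : ℕ → ℚ) (sum_cycleDist_fiber C a ha)
  calc (2 * (q:ℚ) + 1) * N - ((univ.filter (fun j => C j = a)).card : ℚ) * (q * (q + 1))
      = ∑ j ∈ univ.filter (fun j => C j = a),
          ((2 * (q:ℚ) + 1) * (cycleDist C j) - q * (q + 1)) := by
        rw [Finset.sum_sub_distrib, ← Finset.mul_sum, Finset.sum_const,
          nsmul_eq_mul, ← Nat.cast_sum, hsum]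
    _ ≤ _ := Finset.sum_le_sum (fun j _ => sq_bound_q (cycleDist C j) q)

lemma fiber_sq_eq [DecidableEq A] (C : ZMod N → A) (a : A) (q : ℕ)
    (ha : ∃ j₀, C j₀ = a)
    (hq : ∀ j ∈ univ.filter (fun j => C j = a), cycleDist C j = q ∨ cycleDist C j = q + 1) :
    ∑ j ∈ univ.filter (fun j => C j = a), (cycleDist C j : ℚ) ^ 2
      = (2 * (q:ℚ) + 1) * N - ((univ.filter (fun j => C j = a)).card : ℚ) * (q * (q + 1)) := by
  have hsum : ((∑ j ∈ univ.filter (fun j => C j = a), cycleDist C j : ℕ) : ℚ) = N := by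
    exact_mod_cast congrArg (Nat.cast : ℕ → ℚ) (sum_cycleDist_fiber C a ha)
  calc ∑ j ∈ univ.filter (fun j => C j = a), (cycleDist C j : ℚ) ^ 2
      = ∑ j ∈ univ.filter (fun j => C j = a),
          ((2 * (q:ℚ) + 1) * (cycleDist C j) - q * (q + 1)) :=
        Finset.sum_congr rfl (fun j hj => sq_eq_q (cycleDist C j) q (hq j hj))
    _ = _ := by
        rw [Finset.sum_sub_distrib, ← Finset.mul_sum, Finset.sum_const,
          nsmul_eq_mul, ← Nat.cast_sum, hsum]

lemma split_fin2 (f : ZMod N → ℚ) (D : ZMod N → Fin 2) :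
    ∑ j : ZMod N, f j = ∑ j ∈ univ.filter (fun j => D j = 0), f j
      + ∑ j ∈ univ.filter (fun j => D j = 1), f j := by
  rw [← Finset.sum_filter_add_sum_filter_not univ (fun j => D j = 0) f]
  congr 2
  ext j
  have : ∀ x : Fin 2, (¬ x = 0) ↔ x = 1 := by decide
  simp [this]


end Aux2

/-- Sufficiency of the Euclidean distance profile for variance minimality: an admissible
binary cycle whose symbol `a₁` has exactly `m₁ − m₂` instances at distance 1 and `m₂` at
distance 2, and whose symbol `a₂` only takes distances `ℓ = ⌊N/m₂⌋` or `u = ⌈N/m₂⌉`,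
minimizes the variance among all admissible cycles. -/

theorem sufficiency_euclid_profile (m₁ m₂ : ℕ) (h2 : 1 ≤ m₂) (h12 : m₂ ≤ m₁)
    (N : ℕ) (hN : N = m₁ + m₂) [NeZero N]
    (ℓ u : ℕ) (hℓ : ℓ = N / m₂) (hu : u = (N + m₂ - 1) / m₂)
    (C : ZMod N → Fin 2) (hC : Admissible ![m₁, m₂] C)
    (hcard1 : (Finset.univ.filter (fun j => C j = 0 ∧ cycleDist C j = 1)).card = m₁ - m₂)
    (hcard2 : (Finset.univ.filter (fun j => C j = 0 ∧ cycleDist C j = 2)).card = m₂)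
    (ha2 : ∀ j : ZMod N, C j = 1 → cycleDist C j = ℓ ∨ cycleDist C j = u) :
    ∀ C' : ZMod N → Fin 2, Admissible ![m₁, m₂] C' →
      cycleVariance C ≤ cycleVariance C' := by
  intro C' hC'
  classical
  have hNpos : 0 < N := Nat.pos_of_ne_zero (NeZero.ne N)
  have hNQ : (0:ℚ) < N := by exact_mod_cast hNpos
  have hf0 : ∀ D : ZMod N → Fin 2, Admissible ![m₁, m₂] D →
      (univ.filter (fun j => D j = 0)).card = m₁ := by
    intro D hD; simpa using hD 0
  have hf1 : ∀ D : ZMod N → Fin 2, Admissible ![m₁, m₂] D →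
      (univ.filter (fun j => D j = 1)).card = m₂ := by
    intro D hD; simpa using hD 1
  have hne0 : ∀ D : ZMod N → Fin 2, Admissible ![m₁, m₂] D → ∃ j, D j = 0 := by
    intro D hD
    have hpos : 0 < (univ.filter (fun j => D j = 0)).card := by
      rw [hf0 D hD]; omega
    obtain ⟨j, hj⟩ := Finset.card_pos.mp hpos
    exact ⟨j, (mem_filter.mp hj).2⟩
  have hne1 : ∀ D : ZMod N → Fin 2, Admissible ![m₁, m₂] D → ∃ j, D j = 1 := by
    intro D hD
    have hpos : 0 < (univ.filter (fun j => D j = 1)).card := by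
      rw [hf1 D hD]; omega
    obtain ⟨j, hj⟩ := Finset.card_pos.mp hpos
    exact ⟨j, (mem_filter.mp hj).2⟩
  have hsumD : ∀ D : ZMod N → Fin 2, Admissible ![m₁, m₂] D →
      ∑ j : ZMod N, (cycleDist D j : ℚ) = 2 * N := by
    intro D hD
    rw [split_fin2 _ D, ← Nat.cast_sum, ← Nat.cast_sum,
      sum_cycleDist_fiber D 0 (hne0 D hD), sum_cycleDist_fiber D 1 (hne1 D hD)]
    ring
  have hvar : ∀ D : ZMod N → Fin 2, Admissible ![m₁, m₂] D →
      cycleVariance D = (∑ j : ZMod N, (cycleDist D j : ℚ) ^ 2 - 4 * N) / N := by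
    intro D hD
    have hmean : cycleMean D = 2 := by
      rw [cycleMean, hsumD D hD]; field_simp
    rw [cycleVariance, hmean]
    congr 1
    have hexp : ∀ x : ℚ, (x - 2) ^ 2 = x ^ 2 - 4 * x + 4 := fun x => by ring
    simp_rw [hexp]
    rw [Finset.sum_add_distrib, Finset.sum_sub_distrib, ← Finset.mul_sum, hsumD D hD,
      Finset.sum_const, card_univ, ZMod.card, nsmul_eq_mul]
    ring
  -- fiber 0 of C has distances in {1, 2}
  set S1 := univ.filter (fun j => C j = 0 ∧ cycleDist C j = 1) with hS1
  set S2 := univ.filter (fun j => C j = 0 ∧ cycleDist C j = 2) with hS2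
  have hdisj : Disjoint S1 S2 := by
    rw [Finset.disjoint_left]
    intro x hx1 hx2
    simp only [hS1, hS2, mem_filter] at hx1 hx2
    omega
  have hsub : S1 ∪ S2 ⊆ univ.filter (fun j => C j = 0) := by
    intro x hx
    simp only [mem_union, hS1, hS2, mem_filter, mem_univ, true_and] at hx ⊢
    tauto
  have hcards : (S1 ∪ S2).card = m₁ := by
    rw [Finset.card_union_of_disjoint hdisj, hcard1, hcard2]; omega
  have hun : univ.filter (fun j => C j = 0) = S1 ∪ S2 :=
    (Finset.eq_of_subset_of_card_le hsub (by rw [hf0 C hC, hcards])).symm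
  obtain ⟨q₀, hq₀C⟩ : ∃ q₀ : ℕ, ∀ j ∈ univ.filter (fun j => C j = 0),
      cycleDist C j = q₀ ∨ cycleDist C j = q₀ + 1 := by
    rcases lt_or_eq_of_le h12 with hlt | heq
    · refine ⟨1, fun j hj => ?_⟩
      have hm : j ∈ S1 ∪ S2 := hun ▸ hj
      simp only [mem_union, hS1, hS2, mem_filter, mem_univ, true_and] at hm
      omega
    · refine ⟨2, fun j hj => ?_⟩
      have hS1e : S1 = ∅ := Finset.card_eq_zero.mp (by rw [hcard1]; omega)
      have hm : j ∈ S1 ∪ S2 := hun ▸ hj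
      rw [hS1e, Finset.empty_union] at hm
      simp only [hS2, mem_filter, mem_univ, true_and] at hm
      omega
  have huℓ : u = ℓ ∨ u = ℓ + 1 := by
    subst hℓ hu
    have hle1 : N / m₂ ≤ (N + m₂ - 1) / m₂ := Nat.div_le_div_right (by omega)
    have heq2 : N + m₂ - 1 = (N - 1) + 1 * m₂ := by omega
    have h3 : (N + m₂ - 1) / m₂ = (N - 1) / m₂ + 1 := by
      rw [heq2, Nat.add_mul_div_right _ _ (by omega : 0 < m₂)]
    have h4 : (N - 1) / m₂ ≤ N / m₂ := Nat.div_le_div_right (by omega)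
    omega
  have hq1C : ∀ j ∈ univ.filter (fun j => C j = 1),
      cycleDist C j = ℓ ∨ cycleDist C j = ℓ + 1 := by
    intro j hj
    have := ha2 j (mem_filter.mp hj).2
    omega
  have hMC : ∑ j : ZMod N, (cycleDist C j : ℚ) ^ 2
      = ((2 * (q₀:ℚ) + 1) * N - (m₁:ℚ) * (q₀ * (q₀ + 1)))
        + ((2 * (ℓ:ℚ) + 1) * N - (m₂:ℚ) * (ℓ * (ℓ + 1))) := by
    rw [split_fin2 _ C, fiber_sq_eq C 0 q₀ (hne0 C hC) hq₀C,
      fiber_sq_eq C 1 ℓ (hne1 C hC) hq1C, hf0 C hC, hf1 C hC]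
  have hMC' : ((2 * (q₀:ℚ) + 1) * N - (m₁:ℚ) * (q₀ * (q₀ + 1)))
        + ((2 * (ℓ:ℚ) + 1) * N - (m₂:ℚ) * (ℓ * (ℓ + 1)))
      ≤ ∑ j : ZMod N, (cycleDist C' j : ℚ) ^ 2 := by
    rw [split_fin2 _ C']
    have g0 := fiber_sq_ge C' 0 q₀ (hne0 C' hC')
    have g1 := fiber_sq_ge C' 1 ℓ (hne1 C' hC')
    rw [hf0 C' hC'] at g0
    rw [hf1 C' hC'] at g1
    exact add_le_add g0 g1
  have hle : ∑ j : ZMod N, (cycleDist C j : ℚ) ^ 2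
      ≤ ∑ j : ZMod N, (cycleDist C' j : ℚ) ^ 2 := by
    rw [hMC]; exact hMC'
  rw [hvar C hC, hvar C' hC']
  gcongr
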